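/- Let $h \in (1/2, 1)$ and $\beta \in [-1,1]$. Define $u_h:[-1,1]\to\mathbb{R}$ as the continuous piecewise linear function on the mesh $\{-1,-h,0,h,1\}$ with $u_h(-1)=-1$, $u_h(-h) = -\sqrt{2h}-\beta(\sqrt{2h}-1)$, $u_h(0)=\beta$, $u_h(h)=\sqrt{2h}-\beta(\sqrt{2h}-1)$, $u_h(1)=1$. Then $u_h$ minimizes $\int_{-1}^1|\mathrm{sgn}(x)-v(x)|\,dx$ over all continuous piecewise linear $v$ on this mesh with $v(-1)=-1$, $v(1)=1$. -/

import Mathlib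

open MeasureTheory

/-- Linear interpolation between `(x0, y0)` and `(x1, y1)`. -/
noncomputable def interp (x0 x1 y0 y1 x : ℝ) : ℝ :=
  y0 + (y1 - y0) * (x - x0) / (x1 - x0)

/-- Continuous piecewise linear function on the mesh `{-1, -h, 0, h, 1}` with
nodal values `a, b, c, d, e`. -/
noncomputable def mesh4 (h a b c d e : ℝ) (x : ℝ) : ℝ :=
  if x ≤ -h then interp (-1) (-h) a b x
  else if x ≤ 0 then interp (-h) 0 b c x
  else if x ≤ h then interp 0 h c d x
  else interp h 1 d e x

lemma integral_affine (p q a b : ℝ) :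
    ∫ x in a..b, (p + q * x) = p * (b - a) + q * (b^2 - a^2) / 2 := by
  have hc : Continuous fun x : ℝ => q * x := by continuity
  rw [intervalIntegral.integral_add intervalIntegrable_const (hc.intervalIntegrable a b),
    intervalIntegral.integral_const, intervalIntegral.integral_const_mul,
    integral_id]
  simp; ring

lemma piece_intble {f : ℝ → ℝ} {p q a b : ℝ} (hab : a ≤ b)
    (hf : ∀ x ∈ Set.Ioo a b, f x = p + q * x) :
    IntervalIntegrable f volume a b := by
  have hc : Continuous fun x : ℝ => p + q * x := by continuity
  rw [intervalIntegrable_iff_integrableOn_Ioo_of_le hab]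
  exact ((hc.integrableOn_Icc (a := a) (b := b)).mono_set Set.Ioo_subset_Icc_self).congr_fun
    (fun x hx => (hf x hx).symm) measurableSet_Ioo

lemma piece_eq {f : ℝ → ℝ} {p q a b : ℝ} (hab : a ≤ b)
    (hf : ∀ x ∈ Set.Ioo a b, f x = p + q * x) :
    ∫ x in a..b, f x = p * (b - a) + q * (b^2 - a^2) / 2 := by
  rw [← integral_affine p q a b]
  apply intervalIntegral.integral_congr_ae
  filter_upwards [(Set.countable_singleton b).ae_notMem volume] with x hxb hx
  exact hf x ⟨((Set.uIoc_of_le hab ▸ hx).1), lt_of_le_of_ne (Set.uIoc_of_le hab ▸ hx).2 hxb⟩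

lemma piece_lb {f : ℝ → ℝ} {p q a b : ℝ} {ε : ℝ} (hε : ε = 1 ∨ ε = -1) (hab : a ≤ b)
    (hf : ∀ x ∈ Set.Ioo a b, f x = p + q * x) :
    ε * (p * (b - a) + q * (b^2 - a^2) / 2) ≤ ∫ x in a..b, |f x| := by
  have hi := piece_intble hab hf
  have h1 : ε * (p * (b - a) + q * (b^2 - a^2) / 2) = ∫ x in a..b, ε * f x := by
    rw [intervalIntegral.integral_const_mul, piece_eq hab hf]
  rw [h1]
  refine intervalIntegral.integral_mono_on hab (hi.const_mul ε) hi.abs ?_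
  intro x _
  rcases hε with h | h <;> simp [h, le_abs_self, neg_le_abs]

lemma piece_abs_eq {f : ℝ → ℝ} {p q a b : ℝ} {ε : ℝ} (hab : a ≤ b)
    (hf : ∀ x ∈ Set.Ioo a b, f x = p + q * x)
    (hsign : ∀ x ∈ Set.Ioo a b, |f x| = ε * f x) :
    ∫ x in a..b, |f x| = ε * (p * (b - a) + q * (b^2 - a^2) / 2) := by
  have h2 : ∀ x ∈ Set.Ioo a b, |f x| = ε * p + ε * q * x := by
    intro x hx; rw [hsign x hx, hf x hx]; ring
  rw [piece_eq hab h2]; ring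

lemma split6 {f : ℝ → ℝ} {x0 x1 x2 x3 x4 x5 x6 : ℝ}
    (i1 : IntervalIntegrable f volume x0 x1) (i2 : IntervalIntegrable f volume x1 x2)
    (i3 : IntervalIntegrable f volume x2 x3) (i4 : IntervalIntegrable f volume x3 x4)
    (i5 : IntervalIntegrable f volume x4 x5) (i6 : IntervalIntegrable f volume x5 x6) :
    ∫ x in x0..x6, f x = (∫ x in x0..x1, f x) + (∫ x in x1..x2, f x) + (∫ x in x2..x3, f x)
      + (∫ x in x3..x4, f x) + (∫ x in x4..x5, f x) + (∫ x in x5..x6, f x) := by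
  rw [intervalIntegral.integral_add_adjacent_intervals i1 i2,
    intervalIntegral.integral_add_adjacent_intervals (i1.trans i2) i3,
    intervalIntegral.integral_add_adjacent_intervals ((i1.trans i2).trans i3) i4,
    intervalIntegral.integral_add_adjacent_intervals (((i1.trans i2).trans i3).trans i4) i5,
    intervalIntegral.integral_add_adjacent_intervals
      ((((i1.trans i2).trans i3).trans i4).trans i5) i6]

lemma hsum_lemma (h m B C D : ℝ) (hh0 : 1/2 < h) (hh1 : h < 1) (hm2 : m^2 = h/2) :
    1 * ((-(B+1)/(1-h)) * ((-h) - (-1)) + (-(B+1)/(1-h)) * ((-h)^2 - (-1)^2)/2)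
    + 1 * ((-1-C) * ((-m) - (-h)) + ((B-C)/h) * ((-m)^2 - (-h)^2)/2)
    + (-1) * ((-1-C) * (0 - (-m)) + ((B-C)/h) * ((0:ℝ)^2 - (-m)^2)/2)
    + 1 * ((1-C) * (m - 0) + ((C-D)/h) * (m^2 - (0:ℝ)^2)/2)
    + (-1) * ((1-C) * (h - m) + ((C-D)/h) * (h^2 - m^2)/2)
    + (-1) * (((1-D)/(1-h)) * (1 - h) + ((D-1)/(1-h)) * ((1:ℝ)^2 - h^2)/2)
    = 4*m - 1 - h := by
  have hh : h ≠ 0 := by linarith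
  have h1 : (1:ℝ) - h ≠ 0 := by linarith
  field_simp
  ring_nf
  linear_combination ((B-D)*2*(1-h)) * hm2

section main
variable {h m : ℝ}

lemma pieces (hh0 : 1/2 < h) (hh1 : h < 1) (hm2 : m^2 = h/2) (hm0 : 0 < m) (hmh : m < h)
    (B C D : ℝ) :
    (∀ x ∈ Set.Ioo (-1:ℝ) (-h), Real.sign x - mesh4 h (-1) B C D 1 x
        = (-(B+1)/(1-h)) + (-(B+1)/(1-h)) * x)
    ∧ (∀ x ∈ Set.Ioo (-h) (-m), Real.sign x - mesh4 h (-1) B C D 1 x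
        = (-1-C) + ((B-C)/h) * x)
    ∧ (∀ x ∈ Set.Ioo (-m) (0:ℝ), Real.sign x - mesh4 h (-1) B C D 1 x
        = (-1-C) + ((B-C)/h) * x)
    ∧ (∀ x ∈ Set.Ioo (0:ℝ) m, Real.sign x - mesh4 h (-1) B C D 1 x
        = (1-C) + ((C-D)/h) * x)
    ∧ (∀ x ∈ Set.Ioo m h, Real.sign x - mesh4 h (-1) B C D 1 x
        = (1-C) + ((C-D)/h) * x)
    ∧ (∀ x ∈ Set.Ioo h (1:ℝ), Real.sign x - mesh4 h (-1) B C D 1 x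
        = ((1-D)/(1-h)) + ((D-1)/(1-h)) * x) := by
  have hh : h ≠ 0 := by linarith
  have h1 : (1:ℝ) - h ≠ 0 := by linarith
  refine ⟨?_, ?_, ?_, ?_, ?_, ?_⟩ <;> intro x hx
  · have hle : x ≤ -h := hx.2.le
    rw [Real.sign_of_neg (by linarith [hx.2] : x < 0)]
    simp only [mesh4, interp, if_pos hle]
    rw [show (-h - -1 : ℝ) = 1 - h by ring]
    field_simp [h1]
    ring
  · have hn1 : ¬ x ≤ -h := not_le.2 hx.1
    have hle : x ≤ 0 := by linarith [hx.2]
    rw [Real.sign_of_neg (by linarith [hx.2] : x < 0)]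
    simp only [mesh4, interp, if_neg hn1, if_pos hle]
    rw [show (0 - -h : ℝ) = h by ring]
    field_simp [hh]
    ring
  · have hn1 : ¬ x ≤ -h := not_le.2 (by linarith [hx.1])
    have hle : x ≤ 0 := hx.2.le
    rw [Real.sign_of_neg hx.2]
    simp only [mesh4, interp, if_neg hn1, if_pos hle]
    rw [show (0 - -h : ℝ) = h by ring]
    field_simp [hh]
    ring
  · have hn1 : ¬ x ≤ -h := not_le.2 (by linarith [hx.1])
    have hn2 : ¬ x ≤ 0 := not_le.2 hx.1
    have hle : x ≤ h := by linarith [hx.2]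
    rw [Real.sign_of_pos hx.1]
    simp only [mesh4, interp, if_neg hn1, if_neg hn2, if_pos hle]
    rw [show (h - 0 : ℝ) = h by ring]
    field_simp [hh]
    ring
  · have hn1 : ¬ x ≤ -h := not_le.2 (by linarith [hx.1])
    have hn2 : ¬ x ≤ 0 := not_le.2 (by linarith [hx.1])
    have hle : x ≤ h := hx.2.le
    rw [Real.sign_of_pos (by linarith [hx.1] : (0:ℝ) < x)]
    simp only [mesh4, interp, if_neg hn1, if_neg hn2, if_pos hle]
    rw [show (h - 0 : ℝ) = h by ring]
    field_simp [hh]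
    ring
  · have hn1 : ¬ x ≤ -h := not_le.2 (by linarith [hx.1])
    have hn2 : ¬ x ≤ 0 := not_le.2 (by linarith [hx.1])
    have hn3 : ¬ x ≤ h := not_le.2 hx.1
    rw [Real.sign_of_pos (by linarith [hx.1] : (0:ℝ) < x)]
    simp only [mesh4, interp, if_neg hn1, if_neg hn2, if_neg hn3]
    field_simp [h1]
    ring

end main

section main2
variable {h m : ℝ}

lemma mesh_lb (hh0 : 1/2 < h) (hh1 : h < 1) (hm2 : m^2 = h/2) (hm0 : 0 < m) (hmh : m < h)
    (B C D : ℝ) :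
    4*m - 1 - h ≤ ∫ x in (-1:ℝ)..1, |Real.sign x - mesh4 h (-1) B C D 1 x| := by
  obtain ⟨hf1, hf2, hf3, hf4, hf5, hf6⟩ := pieces hh0 hh1 hm2 hm0 hmh B C D
  have o1 : (-1:ℝ) ≤ -h := by linarith
  have o2 : -h ≤ -m := by linarith
  have o3 : -m ≤ (0:ℝ) := by linarith
  have o4 : (0:ℝ) ≤ m := by linarith
  have o5 : m ≤ h := by linarith
  have o6 : h ≤ (1:ℝ) := by linarith
  rw [split6 (f := fun x => |Real.sign x - mesh4 h (-1) B C D 1 x|)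
    ((piece_intble o1 hf1).abs) ((piece_intble o2 hf2).abs) ((piece_intble o3 hf3).abs)
    ((piece_intble o4 hf4).abs) ((piece_intble o5 hf5).abs) ((piece_intble o6 hf6).abs)]
  have L1 := piece_lb (Or.inl rfl) o1 hf1
  have L2 := piece_lb (Or.inl rfl) o2 hf2
  have L3 := piece_lb (Or.inr rfl) o3 hf3
  have L4 := piece_lb (Or.inl rfl) o4 hf4
  have L5 := piece_lb (Or.inr rfl) o5 hf5
  have L6 := piece_lb (Or.inr rfl) o6 hf6
  have hs := hsum_lemma h m B C D hh0 hh1 hm2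
  linarith

lemma mesh_eq (hh0 : 1/2 < h) (hh1 : h < 1) (hm2 : m^2 = h/2) (hm0 : 0 < m) (hmh : m < h)
    (β : ℝ) (hβ1 : -1 ≤ β) (hβ2 : β ≤ 1) :
    (∫ x in (-1:ℝ)..1,
      |Real.sign x - mesh4 h (-1) (-(2*m) - β*(2*m-1)) β (2*m - β*(2*m-1)) 1 x|)
      ≤ 4*m - 1 - h := by
  have hh : (0:ℝ) < h := by linarith
  have h1 : (0:ℝ) < 1 - h := by linarith
  have h2m : 1 < 2*m := by nlinarith
  obtain ⟨hf1, hf2, hf3, hf4, hf5, hf6⟩ :=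
    pieces hh0 hh1 hm2 hm0 hmh (-(2*m) - β*(2*m-1)) β (2*m - β*(2*m-1))
  have o1 : (-1:ℝ) ≤ -h := by linarith
  have o2 : -h ≤ -m := by linarith
  have o3 : -m ≤ (0:ℝ) := by linarith
  have o4 : (0:ℝ) ≤ m := by linarith
  have o5 : m ≤ h := by linarith
  have o6 : h ≤ (1:ℝ) := by linarith
  rw [split6 (f := fun x =>
      |Real.sign x - mesh4 h (-1) (-(2*m) - β*(2*m-1)) β (2*m - β*(2*m-1)) 1 x|)
    ((piece_intble o1 hf1).abs) ((piece_intble o2 hf2).abs) ((piece_intble o3 hf3).abs)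
    ((piece_intble o4 hf4).abs) ((piece_intble o5 hf5).abs) ((piece_intble o6 hf6).abs)]
  have s1 : ∀ x ∈ Set.Ioo (-1:ℝ) (-h),
      |Real.sign x - mesh4 h (-1) (-(2*m) - β*(2*m-1)) β (2*m - β*(2*m-1)) 1 x|
      = 1 * (Real.sign x - mesh4 h (-1) (-(2*m) - β*(2*m-1)) β (2*m - β*(2*m-1)) 1 x) := by
    intro x hx
    rw [one_mul, hf1 x hx, abs_of_nonneg]
    have heq : (-(-(2*m) - β*(2*m-1)+1)/(1-h)) + (-(-(2*m) - β*(2*m-1)+1)/(1-h)) * x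
        = (((2*m-1)*(1+β)) * (1+x)) / (1-h) := by ring
    rw [heq]
    apply div_nonneg _ h1.le
    apply mul_nonneg (mul_nonneg (by linarith) (by linarith)) (by linarith [hx.1])
  have s2 : ∀ x ∈ Set.Ioo (-h) (-m),
      |Real.sign x - mesh4 h (-1) (-(2*m) - β*(2*m-1)) β (2*m - β*(2*m-1)) 1 x|
      = 1 * (Real.sign x - mesh4 h (-1) (-(2*m) - β*(2*m-1)) β (2*m - β*(2*m-1)) 1 x) := by
    intro x hx
    rw [one_mul, hf2 x hx, abs_of_nonneg]
    have heq : (-1-β) + (((-(2*m) - β*(2*m-1))-β)/h) * x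
        = ((1+β) * (-(h + 2*m*x))) / h := by field_simp; ring
    rw [heq]
    apply div_nonneg _ hh.le
    have hmb : (1+β)*m^2 = (1+β)*(h/2) := by rw [hm2]
    nlinarith [mul_nonneg (show (0:ℝ) ≤ 1+β by linarith)
      (mul_nonneg hm0.le (show (0:ℝ) ≤ -m - x by linarith [hx.2])), hmb]
  have s3 : ∀ x ∈ Set.Ioo (-m) (0:ℝ),
      |Real.sign x - mesh4 h (-1) (-(2*m) - β*(2*m-1)) β (2*m - β*(2*m-1)) 1 x|
      = (-1) * (Real.sign x - mesh4 h (-1) (-(2*m) - β*(2*m-1)) β (2*m - β*(2*m-1)) 1 x) := by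
    intro x hx
    rw [hf3 x hx, abs_of_nonpos, neg_one_mul]
    have heq : (-1-β) + (((-(2*m) - β*(2*m-1))-β)/h) * x
        = ((1+β) * (-(h + 2*m*x))) / h := by field_simp; ring
    rw [heq]
    apply div_nonpos_of_nonpos_of_nonneg _ hh.le
    have hmb : (1+β)*m^2 = (1+β)*(h/2) := by rw [hm2]
    nlinarith [mul_nonneg (show (0:ℝ) ≤ 1+β by linarith)
      (mul_nonneg hm0.le (show (0:ℝ) ≤ m + x by linarith [hx.1])), hmb]
  have s4 : ∀ x ∈ Set.Ioo (0:ℝ) m,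
      |Real.sign x - mesh4 h (-1) (-(2*m) - β*(2*m-1)) β (2*m - β*(2*m-1)) 1 x|
      = 1 * (Real.sign x - mesh4 h (-1) (-(2*m) - β*(2*m-1)) β (2*m - β*(2*m-1)) 1 x) := by
    intro x hx
    rw [one_mul, hf4 x hx, abs_of_nonneg]
    have heq : (1-β) + ((β-(2*m - β*(2*m-1)))/h) * x
        = ((1-β) * (h - 2*m*x)) / h := by field_simp; ring
    rw [heq]
    apply div_nonneg _ hh.le
    have hmb : (1-β)*m^2 = (1-β)*(h/2) := by rw [hm2]
    nlinarith [mul_nonneg (show (0:ℝ) ≤ 1-β by linarith)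
      (mul_nonneg hm0.le (show (0:ℝ) ≤ m - x by linarith [hx.2])), hmb]
  have s5 : ∀ x ∈ Set.Ioo m h,
      |Real.sign x - mesh4 h (-1) (-(2*m) - β*(2*m-1)) β (2*m - β*(2*m-1)) 1 x|
      = (-1) * (Real.sign x - mesh4 h (-1) (-(2*m) - β*(2*m-1)) β (2*m - β*(2*m-1)) 1 x) := by
    intro x hx
    rw [hf5 x hx, abs_of_nonpos, neg_one_mul]
    have heq : (1-β) + ((β-(2*m - β*(2*m-1)))/h) * x
        = ((1-β) * (h - 2*m*x)) / h := by field_simp; ring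
    rw [heq]
    apply div_nonpos_of_nonpos_of_nonneg _ hh.le
    have hmb : (1-β)*m^2 = (1-β)*(h/2) := by rw [hm2]
    nlinarith [mul_nonneg (show (0:ℝ) ≤ 1-β by linarith)
      (mul_nonneg hm0.le (show (0:ℝ) ≤ x - m by linarith [hx.1])), hmb]
  have s6 : ∀ x ∈ Set.Ioo h (1:ℝ),
      |Real.sign x - mesh4 h (-1) (-(2*m) - β*(2*m-1)) β (2*m - β*(2*m-1)) 1 x|
      = (-1) * (Real.sign x - mesh4 h (-1) (-(2*m) - β*(2*m-1)) β (2*m - β*(2*m-1)) 1 x) := by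
    intro x hx
    rw [hf6 x hx, abs_of_nonpos, neg_one_mul]
    have heq : ((1-(2*m - β*(2*m-1)))/(1-h)) + (((2*m - β*(2*m-1))-1)/(1-h)) * x
        = (-((2*m-1)*(1-β)) * (1-x)) / (1-h) := by ring
    rw [heq]
    apply div_nonpos_of_nonpos_of_nonneg _ h1.le
    apply mul_nonpos_of_nonpos_of_nonneg (by nlinarith) (by linarith [hx.2])
  rw [piece_abs_eq o1 hf1 s1, piece_abs_eq o2 hf2 s2, piece_abs_eq o3 hf3 s3,
    piece_abs_eq o4 hf4 s4, piece_abs_eq o5 hf5 s5, piece_abs_eq o6 hf6 s6]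
  have hs := hsum_lemma h m (-(2*m) - β*(2*m-1)) β (2*m - β*(2*m-1)) hh0 hh1 hm2
  linarith

end main2

theorem stmt11 (h : ℝ) (hh0 : 1 / 2 < h) (hh1 : h < 1)
    (β : ℝ) (hβ : β ∈ Set.Icc (-1 : ℝ) 1) :
    ∀ b c d : ℝ,
      (∫ x in (-1:ℝ)..1,
        |Real.sign x -
          mesh4 h (-1) (-Real.sqrt (2 * h) - β * (Real.sqrt (2 * h) - 1)) β
            (Real.sqrt (2 * h) - β * (Real.sqrt (2 * h) - 1)) 1 x|) ≤
        ∫ x in (-1:ℝ)..1, |Real.sign x - mesh4 h (-1) b c d 1 x| := by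
  intro b c d
  set m := Real.sqrt (h/2) with hm
  have hm2 : m^2 = h/2 := Real.sq_sqrt (by linarith)
  have hm0 : 0 < m := Real.sqrt_pos.2 (by linarith)
  have hmh : m < h := by nlinarith
  have hs : Real.sqrt (2*h) = 2*m := by
    rw [show (2*h : ℝ) = (2*m)^2 by linarith [hm2], Real.sqrt_sq (by linarith)]
  rw [hs]
  calc (∫ x in (-1:ℝ)..1,
        |Real.sign x - mesh4 h (-1) (-(2*m) - β*(2*m-1)) β (2*m - β*(2*m-1)) 1 x|)
      ≤ 4*m - 1 - h := mesh_eq hh0 hh1 hm2 hm0 hmh β hβ.1 hβ.2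
    _ ≤ _ := mesh_lb hh0 hh1 hm2 hm0 hmh b c d
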